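/- arXiv:2110.05271 — 2 statements merged into one kernel-verified Lean document; each statement's English description precedes it below -/
import Mathlib

section
/- Let γ : [t₀, t₁] → [0, ∞) be continuous, left-differentiable on (t₀, t₁], and suppose there exist b ∈ ℝ and a continuous function g : [t₀, t₁] → [0, ∞) such that the left derivative of γ at every t satisfies (d⁻γ/dt)(t) ≤ b·γ(t) + g(t). Then for every t ∈ [t₀, t₁], γ(t) ≤ e^{b(t - t₀)}·γ(t₀) + ∫_{t₀}^{t} e^{b(t-s)} g(s) ds. -/
open Set

/-- If `G` is continuous on `[a,c]` with nonpositive left derivative on `(a,c]`,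
then `G c ≤ G a`. Proved by time reversal and the right-derivative fencing theorem. -/
lemma left_deriv_nonpos_le {G G' : ℝ → ℝ} {a c : ℝ} (hac : a ≤ c)
    (hGc : ContinuousOn G (Icc a c))
    (hG' : ∀ x ∈ Ioc a c, HasDerivWithinAt G (G' x) (Iic x) x)
    (hle : ∀ x ∈ Ioc a c, G' x ≤ 0) : G c ≤ G a := by
  set H : ℝ → ℝ := fun s => -G (a + c - s) with hH
  have key : ∀ x ∈ Icc a c, H x ≤ -G c := by
    apply image_le_of_deriv_right_le_deriv_boundary
      (f' := fun s => G' (a + c - s)) (B := fun _ => -G c) (B' := fun _ => 0)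
    · apply ContinuousOn.neg
      apply hGc.comp (by fun_prop)
      intro s hs
      constructor <;> simp at hs ⊢ <;> linarith [hs.1, hs.2]
    · intro s hs
      have hx : a + c - s ∈ Ioc a c := ⟨by linarith [hs.2], by linarith [hs.1]⟩
      have haff : HasDerivWithinAt (fun s : ℝ => a + c - s) (-1) (Ici s) s := by
        exact ((hasDerivAt_const s (a + c)).sub (hasDerivAt_id s)).hasDerivWithinAt.congr_deriv (by simp)
      have hmaps : MapsTo (fun s : ℝ => a + c - s) (Ici s) (Iic (a + c - s)) := by
        intro y hy; simp at hy ⊢; linarith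
      have := ((hG' _ hx).comp s haff hmaps).neg
      exact this.congr_deriv (by ring)
    · simp [hH]
    · exact continuousOn_const
    · intro s _; exact hasDerivWithinAt_const s _ _
    · intro s hs
      exact hle _ ⟨by linarith [hs.2], by linarith [hs.1]⟩
  have := key c ⟨hac, le_rfl⟩
  simp [hH] at this
  linarith

theorem gronwall_left_derivative (t₀ t₁ : ℝ) (ht : t₀ ≤ t₁) (h0 : 0 ≤ t₀)
    (γ g : ℝ → ℝ) (γ' : ℝ → ℝ) (b : ℝ)
    (hγc : ContinuousOn γ (Icc t₀ t₁))
    (hγnn : ∀ t ∈ Icc t₀ t₁, 0 ≤ γ t)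
    (hgc : ContinuousOn g (Icc t₀ t₁))
    (hgnn : ∀ t ∈ Icc t₀ t₁, 0 ≤ g t)
    (hγd : ∀ t ∈ Ioc t₀ t₁, HasDerivWithinAt γ (γ' t) (Iic t) t)
    (hineq : ∀ t ∈ Ioc t₀ t₁, γ' t ≤ b * γ t + g t) :
    ∀ t ∈ Icc t₀ t₁,
      γ t ≤ Real.exp (b * (t - t₀)) * γ t₀ + ∫ s in t₀..t, Real.exp (b * (t - s)) * g s := by
  intro t htm
  set f : ℝ → ℝ := fun s => Real.exp (-(b * s)) * g s with hf
  have hfc : ContinuousOn f (Icc t₀ t₁) := by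
    apply ContinuousOn.mul (by fun_prop) hgc
  set G : ℝ → ℝ := fun x => Real.exp (-(b * x)) * γ x - ∫ s in t₀..x, f s with hG
  have hGle : G t ≤ G t₀ := by
    apply left_deriv_nonpos_le (G' := fun x =>
        (Real.exp (-(b * x)) * γ' x + (-b) * Real.exp (-(b * x)) * γ x) - f x) htm.1
    · apply ContinuousOn.sub
      · exact ContinuousOn.mul (by fun_prop) (hγc.mono (Icc_subset_Icc le_rfl htm.2))
      · have := intervalIntegral.continuousOn_primitive_interval
          (a := t₀) (b := t) (μ := MeasureTheory.volume) (f := f)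
          ((hfc.mono (by rw [uIcc_of_le htm.1]; exact Icc_subset_Icc le_rfl htm.2)).integrableOn_compact
            (by rw [uIcc_of_le htm.1]; exact isCompact_Icc))
        rw [uIcc_of_le htm.1] at this
        exact this
    · intro x hx
      have hx' : x ∈ Ioc t₀ t₁ := ⟨hx.1, hx.2.trans htm.2⟩
      have hexp : HasDerivWithinAt (fun y : ℝ => Real.exp (-(b * y)))
          ((-b) * Real.exp (-(b * x))) (Iic x) x := by
        have := (Real.hasDerivAt_exp (-(b * x))).comp x
          (by simpa using ((hasDerivAt_id x).const_mul b).neg)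
        exact (this.hasDerivWithinAt).congr_deriv (by ring)
      have h1 : HasDerivWithinAt (fun y => Real.exp (-(b * y)) * γ y)
          (Real.exp (-(b * x)) * γ' x + (-b) * Real.exp (-(b * x)) * γ x) (Iic x) x := by
        have := hexp.mul (hγd x hx')
        exact this.congr_deriv (by ring)
      have hInt : HasDerivWithinAt (fun y => ∫ s in t₀..y, f s) (f x) (Iic x) x := by
        apply intervalIntegral.integral_hasDerivWithinAt_right (t := Iic x)
        · apply ContinuousOn.intervalIntegrable
          apply hfc.mono
          rw [uIcc_of_le hx.1.le]
          exact Icc_subset_Icc le_rfl hx'.2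
        · refine ⟨Ioc t₀ x, ?_, ?_⟩
          · exact mem_nhdsWithin.2 ⟨Ioi t₀, isOpen_Ioi, hx.1, fun y hy => ⟨hy.1, hy.2⟩⟩
          · exact ((hfc.mono (Ioc_subset_Icc_self.trans (Icc_subset_Icc le_rfl hx'.2))).aestronglyMeasurable
              measurableSet_Ioc)
        · have : ContinuousWithinAt f (Icc t₀ t₁) x := hfc x ⟨hx.1.le, hx'.2⟩
          apply this.mono_of_mem_nhdsWithin
          exact mem_nhdsWithin.2 ⟨Ioi t₀, isOpen_Ioi, hx.1,
            fun y hy => ⟨hy.1.le, hy.2.trans hx'.2⟩⟩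
      exact h1.sub hInt
    · intro x hx
      have hx' : x ∈ Ioc t₀ t₁ := ⟨hx.1, hx.2.trans htm.2⟩
      have h1 := hineq x hx'
      have h2 : (0:ℝ) < Real.exp (-(b * x)) := Real.exp_pos _
      have : Real.exp (-(b * x)) * γ' x ≤ Real.exp (-(b * x)) * (b * γ x + g x) := by
        exact mul_le_mul_of_nonneg_left h1 h2.le
      simp only [hf]
      nlinarith
  -- now unfold G and conclude
  have hint0 : (∫ s in t₀..t₀, f s) = 0 := intervalIntegral.integral_same
  rw [hG] at hGle
  simp only [hint0, sub_zero] at hGle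
  have hexpt : (0:ℝ) < Real.exp (b * t) := Real.exp_pos _
  have key : γ t ≤ Real.exp (b * t) * (Real.exp (-(b * t₀)) * γ t₀) +
      Real.exp (b * t) * ∫ s in t₀..t, f s := by
    have := mul_le_mul_of_nonneg_left hGle hexpt.le
    have hh : Real.exp (b * t) * Real.exp (-(b * t)) = 1 := by
      rw [← Real.exp_add]; simp
    rw [mul_sub, ← mul_assoc, hh, one_mul] at this
    linarith
  have e1 : Real.exp (b * t) * (Real.exp (-(b * t₀)) * γ t₀) = Real.exp (b * (t - t₀)) * γ t₀ := by
    rw [← mul_assoc, ← Real.exp_add]; ring_nf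
  have e2 : Real.exp (b * t) * ∫ s in t₀..t, f s
      = ∫ s in t₀..t, Real.exp (b * (t - s)) * g s := by
    rw [← intervalIntegral.integral_const_mul]
    apply intervalIntegral.integral_congr
    intro s _
    simp only [hf, ← mul_assoc, ← Real.exp_add]
    ring_nf
  rw [e1, e2] at key
  exact key
end

section
/- Let H be a real Hilbert space, n ∈ ℕ, and V : Hⁿ → H a symmetric n-multilinear map such that ⟨V(h, x, …, x), h⟩ ≤ 0 for all h, x ∈ H. Define P(x) := V(x, …, x) and F(x) := P(x) + ζ₂·x for a constant ζ₂ ∈ ℝ. Then ⟨F(x) - F(y), x - y⟩ ≤ ζ₂·‖x - y‖² for all x, y ∈ H. -/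
theorem polynomial_plus_linear_semimonotone {H : Type*} [NormedAddCommGroup H]
    [InnerProductSpace ℝ H] [CompleteSpace H]
    (n : ℕ) (hn : 0 < n)
    (V : ContinuousMultilinearMap ℝ (fun _ : Fin n => H) H)
    (hsym : ∀ (σ : Equiv.Perm (Fin n)) (m : Fin n → H), V m = V (m ∘ σ))
    (hdiss : ∀ h x : H,
      (inner ℝ (V (Function.update (fun _ => x) ⟨0, hn⟩ h)) h : ℝ) ≤ 0)
    (ζ₂ : ℝ) :
    ∀ x y : H,
      (inner ℝ ((V (fun _ => x) + ζ₂ • x) - (V (fun _ => y) + ζ₂ • y)) (x - y) : ℝ)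
        ≤ ζ₂ * ‖x - y‖ ^ 2 := by
  intro x y
  set h : H := x - y with hh
  set φ : ℝ → ℝ := fun t => inner ℝ (V (fun _ => y + t • h)) h with hφ
  -- derivative of φ
  have hswap : ∀ (c : H) (i : Fin n),
      V (Function.update (fun _ : Fin n => c) i h)
        = V (Function.update (fun _ : Fin n => c) ⟨0, hn⟩ h) := by
    intro c i
    rw [hsym (Equiv.swap (⟨0, hn⟩ : Fin n) i)]
    congr 1
    funext j
    rcases eq_or_ne j i with rfl | hji
    · by_cases hj0 : j = ⟨0, hn⟩
      · simp [Equiv.swap_apply_def, Function.update, eq_comm, hj0]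
      · simp [Equiv.swap_apply_def, Function.update, eq_comm, hj0, Ne.symm hj0]
    · rcases eq_or_ne j ⟨0, hn⟩ with rfl | hj0
      · simp [Equiv.swap_apply_def, Function.update, hji.symm]
      · simp [Equiv.swap_apply_of_ne_of_ne hj0 hji, Function.update, hji, hj0]
  have hder : ∀ t : ℝ, HasDerivAt φ
      ((n : ℝ) * inner ℝ (V (Function.update (fun _ : Fin n => y + t • h) ⟨0, hn⟩ h)) h) t := by
    intro t
    have hc : HasDerivAt (fun t : ℝ => (fun _ : Fin n => y + t • h)) (fun _ : Fin n => h) t := by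
      rw [hasDerivAt_pi]
      intro i
      simpa using ((hasDerivAt_id t).smul_const h).const_add y
    have hV : HasDerivAt (fun t : ℝ => V (fun _ : Fin n => y + t • h))
        ((V.linearDeriv (fun _ : Fin n => y + t • h)) (fun _ : Fin n => h)) t :=
      (V.hasFDerivAt (fun _ : Fin n => y + t • h)).comp_hasDerivAt t hc
    have hVal : (V.linearDeriv (fun _ : Fin n => y + t • h)) (fun _ : Fin n => h)
        = (n : ℝ) • V (Function.update (fun _ : Fin n => y + t • h) ⟨0, hn⟩ h) := by
      rw [ContinuousMultilinearMap.linearDeriv_apply]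
      rw [Finset.sum_congr rfl (fun i _ => hswap (y + t • h) i)]
      simp [Finset.card_univ, Nat.cast_smul_eq_nsmul]
    rw [hVal] at hV
    have := hV.inner ℝ (hasDerivAt_const t h)
    simpa [real_inner_smul_left, mul_comm] using this
  have hderiv_nonpos : ∀ t : ℝ, deriv φ t ≤ 0 := by
    intro t
    rw [(hder t).deriv]
    exact mul_nonpos_of_nonneg_of_nonpos (by positivity) (hdiss h (y + t • h))
  have hmono : φ 1 ≤ φ 0 :=
    antitone_of_deriv_nonpos (fun t => (hder t).differentiableAt) hderiv_nonpos
      (by norm_num : (0:ℝ) ≤ 1)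
  have h1 : φ 1 = inner ℝ (V (fun _ : Fin n => x)) h := by
    simp [hφ, hh]
  have h0 : φ 0 = inner ℝ (V (fun _ : Fin n => y)) h := by simp [hφ]
  have key : (inner ℝ (V (fun _ : Fin n => x) - V (fun _ : Fin n => y)) h : ℝ) ≤ 0 := by
    rw [inner_sub_left]
    rw [h1, h0] at hmono
    linarith
  have expand : (inner ℝ ((V (fun _ => x) + ζ₂ • x) - (V (fun _ => y) + ζ₂ • y)) (x - y) : ℝ)
      = inner ℝ (V (fun _ : Fin n => x) - V (fun _ : Fin n => y)) h + ζ₂ * ‖h‖ ^ 2 := by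
    rw [show (V (fun _ => x) + ζ₂ • x) - (V (fun _ => y) + ζ₂ • y)
        = (V (fun _ : Fin n => x) - V (fun _ : Fin n => y)) + ζ₂ • (x - y) by
      module]
    rw [inner_add_left, real_inner_smul_left, real_inner_self_eq_norm_sq, ← hh]
  rw [expand]
  linarith
end
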